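/- Let Ω ⊂ ℝ² be open and let Y : Ω → ℝ⁵ be smooth with η(Y,Y) = 1 on Ω, harmonic into de Sitter space (ΔY = −|∇Y|²_η Y on Ω) and η-conformal on Ω. Identify ℝ² with ℂ via z = t + iθ and set ∂_z := ½(∂_t − i ∂_θ). Then the function z ↦ η_ℂ(∂²_zY(z), ∂²_zY(z)), where η_ℂ is the ℂ-bilinear extension of η to ℂ⁵, is holomorphic on Ω. -/

import Mathlib

noncomputable section

/-- ℝ⁵ with its euclidean norm. -/
abbrev E5 := EuclideanSpace ℝ (Fin 5)

/-- ℂ⁵. -/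
abbrev C5 := Fin 5 → ℂ

/-- The Minkowski bilinear form `η` on ℝ⁵. -/
def etaM (x y : E5) : ℝ := x 0 * y 0 + x 1 * y 1 + x 2 * y 2 + x 3 * y 3 - x 4 * y 4

/-- The ℂ-bilinear extension `η_ℂ` of `η` to ℂ⁵. -/
def etaC (x y : C5) : ℂ := x 0 * y 0 + x 1 * y 1 + x 2 * y 2 + x 3 * y 3 - x 4 * y 4

/-- Partial derivative `∂_t` (real direction) of a ℝ⁵-valued map on ℂ ≅ ℝ², `z = t + iθ`. -/
def pTR (f : ℂ → E5) (z : ℂ) : E5 := deriv (fun s : ℝ => f (z + (s : ℂ))) 0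

/-- Partial derivative `∂_θ` (imaginary direction) of a ℝ⁵-valued map on ℂ ≅ ℝ². -/
def pThR (f : ℂ → E5) (z : ℂ) : E5 := deriv (fun s : ℝ => f (z + (s : ℂ) * Complex.I)) 0

/-- Partial derivative `∂_t` of a ℂ⁵-valued map. -/
def pTC (f : ℂ → C5) (z : ℂ) : C5 := deriv (fun s : ℝ => f (z + (s : ℂ))) 0

/-- Partial derivative `∂_θ` of a ℂ⁵-valued map. -/
def pThC (f : ℂ → C5) (z : ℂ) : C5 := deriv (fun s : ℝ => f (z + (s : ℂ) * Complex.I)) 0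

/-- The Wirtinger derivative `∂_z := ½(∂_t − i∂_θ)`. -/
def dZ (f : ℂ → C5) (z : ℂ) : C5 := (1 / 2 : ℂ) • (pTC f z - Complex.I • pThC f z)

/-- The complexification of a ℝ⁵-valued map. -/
def complexify (Y : ℂ → E5) : ℂ → C5 := fun z i => ((Y z i : ℝ) : ℂ)

namespace BA
open Complex Filter Topology ContinuousLinearMap

variable {E : Type*} [NormedAddCommGroup E] [NormedSpace ℝ E]
variable {Ω : Set ℂ}

/-- Directional derivative operator. -/
def Dd (v : ℂ) (F : ℂ → E) : ℂ → E := fun z => fderiv ℝ F z v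

lemma diffAt (hΩ : IsOpen Ω) {F : ℂ → E} (h : ContDiffOn ℝ (⊤:ℕ∞) F Ω) {z : ℂ} (hz : z ∈ Ω) :
    DifferentiableAt ℝ F z :=
  (h.contDiffAt (hΩ.mem_nhds hz)).differentiableAt (by simp)

lemma contDiffOn_Dd (hΩ : IsOpen Ω) {F : ℂ → E} (h : ContDiffOn ℝ (⊤:ℕ∞) F Ω) (v : ℂ) :
    ContDiffOn ℝ (⊤:ℕ∞) (Dd v F) Ω := by
  have h' : ContDiffOn ℝ (⊤:ℕ∞) (fderiv ℝ F) Ω :=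
    h.fderiv_of_isOpen hΩ (show ((⊤:ℕ∞):WithTop ℕ∞) + 1 ≤ ((⊤:ℕ∞):WithTop ℕ∞) from le_of_eq rfl)
  exact (ContinuousLinearMap.apply ℝ E v).contDiff.comp_contDiffOn h'

lemma Dd_comm (hΩ : IsOpen Ω) {F : ℂ → E} (h : ContDiffOn ℝ (⊤:ℕ∞) F Ω) {z : ℂ} (hz : z ∈ Ω)
    (v w : ℂ) : Dd w (Dd v F) z = Dd v (Dd w F) z := by
  have hsym : IsSymmSndFDerivAt ℝ F z :=
    (h.contDiffAt (hΩ.mem_nhds hz)).isSymmSndFDerivAt (by simp; exact WithTop.coe_le_coe.mpr (le_top : (2:ℕ∞) ≤ ⊤))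
  have hdf : DifferentiableAt ℝ (fderiv ℝ F) z :=
    ((h.fderiv_of_isOpen hΩ (show ((⊤:ℕ∞):WithTop ℕ∞) + 1 ≤ ((⊤:ℕ∞):WithTop ℕ∞) from
      le_of_eq rfl)).contDiffAt (hΩ.mem_nhds hz)).differentiableAt (by simp)
  have key : ∀ v w : ℂ, Dd w (Dd v F) z = fderiv ℝ (fderiv ℝ F) z w v := by
    intro v w
    have hc : Dd v F = (ContinuousLinearMap.apply ℝ E v) ∘ (fderiv ℝ F) := rfl
    simp only [Dd, hc]
    rw [fderiv_comp z ((ContinuousLinearMap.apply ℝ E v).differentiableAt) hdf]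
    simp
  rw [key, key, hsym w v]

lemma line_deriv {F : ℂ → E} {z v : ℂ} (h : DifferentiableAt ℝ F z)
    (g : ℝ → ℂ) (hg : HasDerivAt g v 0) (h0 : g 0 = z) :
    deriv (fun s : ℝ => F (g s)) 0 = fderiv ℝ F z v := by
  have hl : HasFDerivAt F (fderiv ℝ F z) (g 0) := by rw [h0]; exact h.hasFDerivAt
  exact (hl.comp_hasDerivAt 0 hg).deriv

lemma hasDerivAt_lineT (z : ℂ) : HasDerivAt (fun s : ℝ => z + (s:ℂ)) 1 0 := by
  simpa using (Complex.ofRealCLM.hasDerivAt (x := (0:ℝ))).const_add z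

lemma hasDerivAt_lineTh (z : ℂ) :
    HasDerivAt (fun s : ℝ => z + (s:ℂ) * Complex.I) Complex.I 0 := by
  simpa using ((Complex.ofRealCLM.hasDerivAt (x := (0:ℝ))).mul_const Complex.I).const_add z

lemma deriv_congr_line {A B : ℂ → E} (hΩ : IsOpen Ω) (hAB : ∀ w ∈ Ω, A w = B w) {z : ℂ}
    (hz : z ∈ Ω) (g : ℝ → ℂ) (hg : Continuous g) (h0 : g 0 = z) :
    deriv (fun s : ℝ => A (g s)) 0 = deriv (fun s : ℝ => B (g s)) 0 := by
  apply Filter.EventuallyEq.deriv_eq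
  have hm : Ω ∈ 𝓝 (g 0) := by rw [h0]; exact hΩ.mem_nhds hz
  filter_upwards [hg.continuousAt.preimage_mem_nhds hm] with s hs using hAB _ hs

end BA

namespace BA3
open BA Complex Filter Topology ContinuousLinearMap
variable {E : Type*} [NormedAddCommGroup E] [NormedSpace ℂ E]
variable {Ω : Set ℂ}

/-- Wirtinger `∂_z` via `fderiv`. -/
def Wp (F : ℂ → E) : ℂ → E :=
  fun z => (1/2 : ℂ) • (Dd 1 F z - Complex.I • Dd Complex.I F z)

/-- Wirtinger `∂_z̄` via `fderiv`. -/
def Wm (F : ℂ → E) : ℂ → E :=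
  fun z => (1/2 : ℂ) • (Dd 1 F z + Complex.I • Dd Complex.I F z)

lemma contDiffOn_Wp (hΩ : IsOpen Ω) {F : ℂ → E} (h : ContDiffOn ℝ (⊤:ℕ∞) F Ω) :
    ContDiffOn ℝ (⊤:ℕ∞) (Wp F) Ω :=
  (((contDiffOn_Dd hΩ h 1).sub ((contDiffOn_Dd hΩ h Complex.I).const_smul Complex.I)).const_smul
    ((1:ℂ)/2))

lemma contDiffOn_Wm (hΩ : IsOpen Ω) {F : ℂ → E} (h : ContDiffOn ℝ (⊤:ℕ∞) F Ω) :
    ContDiffOn ℝ (⊤:ℕ∞) (Wm F) Ω :=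
  (((contDiffOn_Dd hΩ h 1).add ((contDiffOn_Dd hΩ h Complex.I).const_smul Complex.I)).const_smul
    ((1:ℂ)/2))

lemma Dd_Wp (hΩ : IsOpen Ω) {F : ℂ → E} (h : ContDiffOn ℝ (⊤:ℕ∞) F Ω) {z : ℂ} (hz : z ∈ Ω)
    (v : ℂ) : Dd v (Wp F) z
      = (1/2 : ℂ) • (Dd v (Dd 1 F) z - Complex.I • Dd v (Dd Complex.I F) z) := by
  have h1 : DifferentiableAt ℝ (Dd 1 F) z := diffAt hΩ (contDiffOn_Dd hΩ h 1) hz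
  have hI : DifferentiableAt ℝ (Dd Complex.I F) z := diffAt hΩ (contDiffOn_Dd hΩ h Complex.I) hz
  show fderiv ℝ (fun y => (1/2 : ℂ) • (Dd 1 F y - Complex.I • Dd Complex.I F y)) z v = _
  rw [fderiv_fun_const_smul (by exact (h1.sub (hI.const_smul Complex.I)) : DifferentiableAt ℝ _ z),
    fderiv_fun_sub h1
      (by exact hI.const_smul Complex.I : DifferentiableAt ℝ (fun y => Complex.I • Dd Complex.I F y) z),
      fderiv_fun_const_smul hI]
  simp [Dd]

lemma Dd_Wm (hΩ : IsOpen Ω) {F : ℂ → E} (h : ContDiffOn ℝ (⊤:ℕ∞) F Ω) {z : ℂ} (hz : z ∈ Ω)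
    (v : ℂ) : Dd v (Wm F) z
      = (1/2 : ℂ) • (Dd v (Dd 1 F) z + Complex.I • Dd v (Dd Complex.I F) z) := by
  have h1 : DifferentiableAt ℝ (Dd 1 F) z := diffAt hΩ (contDiffOn_Dd hΩ h 1) hz
  have hI : DifferentiableAt ℝ (Dd Complex.I F) z := diffAt hΩ (contDiffOn_Dd hΩ h Complex.I) hz
  show fderiv ℝ (fun y => (1/2 : ℂ) • (Dd 1 F y + Complex.I • Dd Complex.I F y)) z v = _
  rw [fderiv_fun_const_smul (by exact (h1.add (hI.const_smul Complex.I)) : DifferentiableAt ℝ _ z),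
    fderiv_fun_add h1
      (by exact hI.const_smul Complex.I : DifferentiableAt ℝ (fun y => Complex.I • Dd Complex.I F y) z),
      fderiv_fun_const_smul hI]
  simp [Dd]

lemma Wm_Wp (hΩ : IsOpen Ω) {F : ℂ → E} (h : ContDiffOn ℝ (⊤:ℕ∞) F Ω) {z : ℂ} (hz : z ∈ Ω) :
    Wm (Wp F) z = (1/4 : ℂ) • (Dd 1 (Dd 1 F) z + Dd Complex.I (Dd Complex.I F) z) := by
  show (1/2 : ℂ) • (Dd 1 (Wp F) z + Complex.I • Dd Complex.I (Wp F) z) = _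
  rw [Dd_Wp hΩ h hz 1, Dd_Wp hΩ h hz Complex.I, Dd_comm hΩ h hz 1 Complex.I]
  match_scalars <;> (try ring_nf) <;> (try norm_num [Complex.I_sq])

lemma Wp_Wm (hΩ : IsOpen Ω) {F : ℂ → E} (h : ContDiffOn ℝ (⊤:ℕ∞) F Ω) {z : ℂ} (hz : z ∈ Ω) :
    Wp (Wm F) z = (1/4 : ℂ) • (Dd 1 (Dd 1 F) z + Dd Complex.I (Dd Complex.I F) z) := by
  show (1/2 : ℂ) • (Dd 1 (Wm F) z - Complex.I • Dd Complex.I (Wm F) z) = _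
  rw [Dd_Wm hΩ h hz 1, Dd_Wm hΩ h hz Complex.I, Dd_comm hΩ h hz 1 Complex.I]
  match_scalars <;> (try ring_nf) <;> (try norm_num [Complex.I_sq])

end BA3

namespace BA4
open BA BA3 Complex Filter Topology ContinuousLinearMap

/-- algebraic properties of etaC -/
lemma etaC_symm (x y : C5) : etaC x y = etaC y x := by simp only [etaC]; ring

lemma etaC_smul_left (c : ℂ) (x y : C5) : etaC (c • x) y = c * etaC x y := by
  simp only [etaC, Pi.smul_apply, smul_eq_mul]; ring

lemma etaC_smul_right (c : ℂ) (x y : C5) : etaC x (c • y) = c * etaC x y := by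
  simp only [etaC, Pi.smul_apply, smul_eq_mul]; ring

lemma etaC_add_left (x y w : C5) : etaC (x + y) w = etaC x w + etaC y w := by
  simp only [etaC, Pi.add_apply]; ring

lemma etaC_sub_left (x y w : C5) : etaC (x - y) w = etaC x w - etaC y w := by
  simp only [etaC, Pi.sub_apply]; ring

lemma etaC_add_right (x y w : C5) : etaC w (x + y) = etaC w x + etaC w y := by
  simp only [etaC, Pi.add_apply]; ring

lemma etaC_sub_right (x y w : C5) : etaC w (x - y) = etaC w x - etaC w y := by
  simp only [etaC, Pi.sub_apply]; ring

lemma etaC_Wp_left (F : ℂ → C5) (z : ℂ) (w : C5) :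
    etaC (Wp F z) w = (1/2 : ℂ) * (etaC (Dd 1 F z) w - Complex.I * etaC (Dd Complex.I F z) w) := by
  show etaC ((1/2 : ℂ) • (Dd 1 F z - Complex.I • Dd Complex.I F z)) w = _
  rw [etaC_smul_left, etaC_sub_left, etaC_smul_left]

lemma etaC_Wp_right (F : ℂ → C5) (z : ℂ) (w : C5) :
    etaC w (Wp F z) = (1/2 : ℂ) * (etaC w (Dd 1 F z) - Complex.I * etaC w (Dd Complex.I F z)) := by
  show etaC w ((1/2 : ℂ) • (Dd 1 F z - Complex.I • Dd Complex.I F z)) = _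
  rw [etaC_smul_right, etaC_sub_right, etaC_smul_right]

lemma etaC_Wm_left (F : ℂ → C5) (z : ℂ) (w : C5) :
    etaC (Wm F z) w = (1/2 : ℂ) * (etaC (Dd 1 F z) w + Complex.I * etaC (Dd Complex.I F z) w) := by
  show etaC ((1/2 : ℂ) • (Dd 1 F z + Complex.I • Dd Complex.I F z)) w = _
  rw [etaC_smul_left, etaC_add_left, etaC_smul_left]

/-- Leibniz rule for `etaC` along real directional derivatives. -/
lemma eta_deriv {F G : ℂ → C5} {z : ℂ} (hF : DifferentiableAt ℝ F z)
    (hG : DifferentiableAt ℝ G z) :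
    DifferentiableAt ℝ (fun y => etaC (F y) (G y)) z ∧
    ∀ v : ℂ, fderiv ℝ (fun y => etaC (F y) (G y)) z v
      = etaC (Dd v F z) (G z) + etaC (F z) (Dd v G z) := by
  have hFi : ∀ i : Fin 5, HasFDerivAt (fun y => F y i)
      ((ContinuousLinearMap.proj i).comp (fderiv ℝ F z)) z := fun i =>
    ((ContinuousLinearMap.proj (R := ℝ) (φ := fun _ : Fin 5 => ℂ) i).hasFDerivAt).comp z
      hF.hasFDerivAt
  have hGi : ∀ i : Fin 5, HasFDerivAt (fun y => G y i)
      ((ContinuousLinearMap.proj i).comp (fderiv ℝ G z)) z := fun i =>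
    ((ContinuousLinearMap.proj (R := ℝ) (φ := fun _ : Fin 5 => ℂ) i).hasFDerivAt).comp z
      hG.hasFDerivAt
  have hkey := (((((hFi 0).mul (hGi 0)).add ((hFi 1).mul (hGi 1))).add
      ((hFi 2).mul (hGi 2))).add ((hFi 3).mul (hGi 3))).sub ((hFi 4).mul (hGi 4))
  have hkey' : HasFDerivAt (fun y => etaC (F y) (G y)) _ z := hkey
  refine ⟨hkey'.differentiableAt, fun v => ?_⟩
  rw [hkey'.fderiv]
  simp only [ContinuousLinearMap.add_apply, ContinuousLinearMap.sub_apply,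
    ContinuousLinearMap.smul_apply, ContinuousLinearMap.comp_apply,
    ContinuousLinearMap.proj_apply, smul_eq_mul, etaC, Dd]
  ring

end BA4

namespace BA5
open BA BA3 BA4 Complex Filter Topology ContinuousLinearMap

/-- Canonical ℝ-linear embedding of `E5` into `C5`. -/
def LC : E5 →L[ℝ] C5 :=
  ContinuousLinearMap.pi (fun i => Complex.ofRealCLM.comp (EuclideanSpace.proj i))

@[simp] lemma LC_apply (x : E5) (i : Fin 5) : LC x i = ((x i : ℝ) : ℂ) := by
  simp [LC]

lemma etaC_LC (x y : E5) : etaC (LC x) (LC y) = ((etaM x y : ℝ) : ℂ) := by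
  simp only [etaC, etaM, LC_apply]
  push_cast
  ring

end BA5

open BA BA3 BA4 BA5 Complex Filter Topology ContinuousLinearMap

/-- Bryant's quartic: for a smooth map `Y : Ω → ℝ⁵` into de Sitter space which is harmonic
(`ΔY = −|∇Y|²_η Y`) and `η`-conformal on `Ω`, the function `z ↦ η_ℂ(∂²_zY, ∂²_zY)` is
holomorphic on `Ω`. -/
theorem stmt19 (Ω : Set ℂ) (hΩ : IsOpen Ω) (Y : ℂ → E5)
    (hsm : ContDiffOn ℝ (⊤ : ℕ∞) Y Ω)
    (hsph : ∀ z ∈ Ω, etaM (Y z) (Y z) = 1)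
    (hharm : ∀ z ∈ Ω, pTR (pTR Y) z + pThR (pThR Y) z
      = -(etaM (pTR Y z) (pTR Y z) + etaM (pThR Y z) (pThR Y z)) • Y z)
    (hconf : ∀ z ∈ Ω, etaM (pTR Y z) (pTR Y z) = etaM (pThR Y z) (pThR Y z)
      ∧ etaM (pTR Y z) (pThR Y z) = 0) :
    DifferentiableOn ℂ
      (fun z => etaC (dZ (dZ (complexify Y)) z) (dZ (dZ (complexify Y)) z)) Ω := by
  -- the complexified map, written through the linear embedding
  set X : ℂ → C5 := complexify Y with hXdef
  have hXL : X = fun w => LC (Y w) := by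
    funext w i
    simp [hXdef, complexify]
  have hXsm : ContDiffOn ℝ (⊤:ℕ∞) X Ω := by
    rw [hXL]; exact LC.contDiff.comp_contDiffOn hsm
  have hYd : ∀ {z : ℂ}, z ∈ Ω → DifferentiableAt ℝ Y z := fun hz => diffAt hΩ hsm hz
  have hXd : ∀ {z : ℂ}, z ∈ Ω → DifferentiableAt ℝ X z := fun hz => diffAt hΩ hXsm hz
  -- first derivatives of Y
  have hpT : ∀ w ∈ Ω, pTR Y w = Dd 1 Y w := fun w hw =>
    line_deriv (hYd hw) (fun s : ℝ => w + (s:ℂ)) (hasDerivAt_lineT w) (by simp)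
  have hpTh : ∀ w ∈ Ω, pThR Y w = Dd Complex.I Y w := fun w hw =>
    line_deriv (hYd hw) (fun s : ℝ => w + (s:ℂ) * Complex.I) (hasDerivAt_lineTh w) (by simp)
  -- second derivatives of Y
  have hpT2 : ∀ z ∈ Ω, pTR (pTR Y) z = Dd 1 (Dd 1 Y) z := by
    intro z hz
    have h1 : deriv (fun s : ℝ => pTR Y (z + (s:ℂ))) 0
        = deriv (fun s : ℝ => Dd 1 Y (z + (s:ℂ))) 0 :=
      deriv_congr_line hΩ hpT hz (fun s : ℝ => z + (s:ℂ))
        (continuous_const.add Complex.continuous_ofReal) (by simp)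
    exact h1.trans (line_deriv (diffAt hΩ (contDiffOn_Dd hΩ hsm 1) hz)
      (fun s : ℝ => z + (s:ℂ)) (hasDerivAt_lineT z) (by simp))
  have hpTh2 : ∀ z ∈ Ω, pThR (pThR Y) z = Dd Complex.I (Dd Complex.I Y) z := by
    intro z hz
    have h1 : deriv (fun s : ℝ => pThR Y (z + (s:ℂ) * Complex.I)) 0
        = deriv (fun s : ℝ => Dd Complex.I Y (z + (s:ℂ) * Complex.I)) 0 :=
      deriv_congr_line hΩ hpTh hz (fun s : ℝ => z + (s:ℂ) * Complex.I)
        (continuous_const.add (Complex.continuous_ofReal.mul continuous_const)) (by simp)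
    exact h1.trans (line_deriv (diffAt hΩ (contDiffOn_Dd hΩ hsm Complex.I) hz)
      (fun s : ℝ => z + (s:ℂ) * Complex.I) (hasDerivAt_lineTh z) (by simp))
  -- transfer of derivatives through LC
  have hDdL : ∀ (v : ℂ) (z : ℂ), DifferentiableAt ℝ Y z → Dd v X z = LC (Dd v Y z) := by
    intro v z hz
    rw [hXL]
    show fderiv ℝ (⇑LC ∘ Y) z v = LC (fderiv ℝ Y z v)
    rw [(LC.hasFDerivAt.comp z hz.hasFDerivAt).fderiv]
    simp
  have hDdL2 : ∀ (v : ℂ), ∀ z ∈ Ω, Dd v (Dd v X) z = LC (Dd v (Dd v Y) z) := by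
    intro v z hz
    have hev : Dd v X =ᶠ[𝓝 z] fun w => LC (Dd v Y w) := by
      filter_upwards [hΩ.mem_nhds hz] with w hw using hDdL v w (hYd hw)
    have hd : DifferentiableAt ℝ (Dd v Y) z := diffAt hΩ (contDiffOn_Dd hΩ hsm v) hz
    have : fderiv ℝ (Dd v X) z = fderiv ℝ (⇑LC ∘ Dd v Y) z := hev.fderiv_eq
    show fderiv ℝ (Dd v X) z v = _
    rw [this, (LC.hasFDerivAt.comp z hd.hasFDerivAt).fderiv]
    simp [Dd]
  -- hypotheses in fderiv language
  have H2 : ∀ z ∈ Ω, etaC (X z) (X z) = 1 := by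
    intro z hz
    rw [hXL]
    show etaC (LC (Y z)) (LC (Y z)) = 1
    rw [etaC_LC, hsph z hz]
    norm_num
  have Hc1 : ∀ z ∈ Ω, etaC (Dd 1 X z) (Dd 1 X z) = etaC (Dd Complex.I X z) (Dd Complex.I X z) := by
    intro z hz
    rw [hDdL 1 z (hYd hz), hDdL Complex.I z (hYd hz), etaC_LC, etaC_LC,
      ← hpT z hz, ← hpTh z hz]
    exact congrArg (fun r : ℝ => (r : ℂ)) (hconf z hz).1
  have Hc2 : ∀ z ∈ Ω, etaC (Dd 1 X z) (Dd Complex.I X z) = 0 := by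
    intro z hz
    rw [hDdL 1 z (hYd hz), hDdL Complex.I z (hYd hz), etaC_LC, ← hpT z hz, ← hpTh z hz,
      (hconf z hz).2]
    norm_num
  -- the conformal factor
  set ρ : ℂ → ℂ := fun w =>
    etaC (Dd 1 X w) (Dd 1 X w) + etaC (Dd Complex.I X w) (Dd Complex.I X w) with hρdef
  have hρd : ∀ z ∈ Ω, DifferentiableAt ℝ ρ z := by
    intro z hz
    have h1 := diffAt hΩ (contDiffOn_Dd hΩ hXsm 1) hz
    have hI := diffAt hΩ (contDiffOn_Dd hΩ hXsm Complex.I) hz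
    exact ((eta_deriv h1 h1).1).add ((eta_deriv hI hI).1)
  -- harmonic map equation
  have H1 : ∀ z ∈ Ω, Dd 1 (Dd 1 X) z + Dd Complex.I (Dd Complex.I X) z = (-ρ z) • X z := by
    intro z hz
    rw [hDdL2 1 z hz, hDdL2 Complex.I z hz, ← map_add, ← hpT2 z hz, ← hpTh2 z hz, hharm z hz,
      map_smul]
    have hρval : ρ z
        = ((etaM (pTR Y z) (pTR Y z) + etaM (pThR Y z) (pThR Y z) : ℝ) : ℂ) := by
      rw [hρdef]
      simp only
      rw [hDdL 1 z (hYd hz), hDdL Complex.I z (hYd hz), etaC_LC, etaC_LC, ← hpT z hz,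
        ← hpTh z hz]
      push_cast
      ring
    rw [hXL]
    funext i
    simp only [Pi.smul_apply, LC_apply, Complex.real_smul, smul_eq_mul, hρval]
    push_cast
    ring
  -- conformality: η(∂_z X, ∂_z X) = 0
  have H3 : ∀ z ∈ Ω, etaC (Wp X z) (Wp X z) = 0 := by
    intro z hz
    rw [etaC_Wp_left, etaC_Wp_right, etaC_Wp_right]
    have h1 := Hc1 z hz
    have h2 := Hc2 z hz
    have h2' : etaC (Dd Complex.I X z) (Dd 1 X z) = 0 := by rw [etaC_symm]; exact h2
    linear_combination (1/4 : ℂ) * h1 - (1/4 : ℂ) * Complex.I * h2 - (1/4:ℂ) * Complex.I * h2'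
      + (1/4 : ℂ) * (etaC (Dd Complex.I X z) (Dd Complex.I X z)) * Complex.I_sq
  -- orthogonality relations
  have husm : ContDiffOn ℝ (⊤:ℕ∞) (Wp X) Ω := contDiffOn_Wp hΩ hXsm
  have hud : ∀ {z : ℂ}, z ∈ Ω → DifferentiableAt ℝ (Wp X) z := fun hz => diffAt hΩ husm hz
  have hQsm : ContDiffOn ℝ (⊤:ℕ∞) (Wp (Wp X)) Ω := contDiffOn_Wp hΩ husm
  have hQd : ∀ {z : ℂ}, z ∈ Ω → DifferentiableAt ℝ (Wp (Wp X)) z := fun hz => diffAt hΩ hQsm hz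
  -- F1 : η(∂_v X, X) = 0
  have F1 : ∀ z ∈ Ω, ∀ v : ℂ, etaC (Dd v X z) (X z) = 0 := by
    intro z hz v
    have hconst : (fun w => etaC (X w) (X w)) =ᶠ[𝓝 z] fun _ => (1:ℂ) := by
      filter_upwards [hΩ.mem_nhds hz] with w hw using H2 w hw
    have h0 : fderiv ℝ (fun w => etaC (X w) (X w)) z = fderiv ℝ (fun _ : ℂ => (1:ℂ)) z :=
      hconst.fderiv_eq
    have hfor := (eta_deriv (hXd hz) (hXd hz)).2 v
    rw [h0] at hfor
    simp only [fderiv_fun_const, Pi.zero_apply, ContinuousLinearMap.zero_apply] at hfor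
    have hsymm : etaC (X z) (Dd v X z) = etaC (Dd v X z) (X z) := etaC_symm _ _
    linear_combination (-(1/2) : ℂ) * hfor - ((1/2) : ℂ) * hsymm
  -- F1' : η(u, X) = 0 where u = ∂_z X
  have F1' : ∀ z ∈ Ω, etaC (X z) (Wp X z) = 0 := by
    intro z hz
    rw [etaC_Wp_right]
    have e1 : etaC (X z) (Dd 1 X z) = 0 := (etaC_symm _ _).trans (F1 z hz 1)
    have eI : etaC (X z) (Dd Complex.I X z) = 0 := (etaC_symm _ _).trans (F1 z hz Complex.I)
    rw [e1, eI]
    ring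
  -- F2 : η(X, ∂²_z X) = 0
  have F2 : ∀ z ∈ Ω, etaC (X z) (Wp (Wp X) z) = 0 := by
    intro z hz
    have hzero : (fun w => etaC (X w) (Wp X w)) =ᶠ[𝓝 z] fun _ => (0:ℂ) := by
      filter_upwards [hΩ.mem_nhds hz] with w hw using F1' w hw
    have h0 : fderiv ℝ (fun w => etaC (X w) (Wp X w)) z = fderiv ℝ (fun _ : ℂ => (0:ℂ)) z :=
      hzero.fderiv_eq
    have e1 := (eta_deriv (hXd hz) (hud hz)).2 1
    have eI := (eta_deriv (hXd hz) (hud hz)).2 Complex.I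
    rw [h0] at e1 eI
    simp only [fderiv_fun_const, Pi.zero_apply, ContinuousLinearMap.zero_apply] at e1 eI
    -- combine: 0 = η(u,u) + η(X, Q)
    have hH3 := H3 z hz
    simp only [etaC_Wp_left, etaC_Wp_right] at hH3
    simp only [etaC_Wp_right] at e1 eI ⊢
    linear_combination (-(1/2) : ℂ) * e1 + ((1/2) : ℂ) * Complex.I * eI - hH3
  -- F3 : η(u, ∂²_z X) = 0
  have F3 : ∀ z ∈ Ω, etaC (Wp X z) (Wp (Wp X) z) = 0 := by
    intro z hz
    have hzero : (fun w => etaC (Wp X w) (Wp X w)) =ᶠ[𝓝 z] fun _ => (0:ℂ) := by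
      filter_upwards [hΩ.mem_nhds hz] with w hw using H3 w hw
    have h0 : fderiv ℝ (fun w => etaC (Wp X w) (Wp X w)) z = fderiv ℝ (fun _ : ℂ => (0:ℂ)) z :=
      hzero.fderiv_eq
    have e1 := (eta_deriv (hud hz) (hud hz)).2 1
    have eI := (eta_deriv (hud hz) (hud hz)).2 Complex.I
    rw [h0] at e1 eI
    simp only [fderiv_fun_const, Pi.zero_apply, ContinuousLinearMap.zero_apply] at e1 eI
    have hs1 : etaC (Dd 1 (Wp X) z) (Wp X z) = etaC (Wp X z) (Dd 1 (Wp X) z) := etaC_symm _ _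
    have hsI : etaC (Dd Complex.I (Wp X) z) (Wp X z)
        = etaC (Wp X z) (Dd Complex.I (Wp X) z) := etaC_symm _ _
    rw [etaC_Wp_right]
    linear_combination (-(1/4) : ℂ) * e1 + ((1/4) : ℂ) * Complex.I * eI
      - ((1/4) : ℂ) * hs1 + ((1/4) : ℂ) * Complex.I * hsI
  -- F4 : ∂_z̄ ∂_z X = -(ρ/4) X
  have F4 : ∀ z ∈ Ω, Wm (Wp X) z = ((-1/4 : ℂ) * ρ z) • X z := by
    intro z hz
    rw [Wm_Wp hΩ hXsm hz, H1 z hz, smul_smul]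
    congr 1
    ring
  -- F6 : ∂_z(∂_z̄ ∂_z X) is a combination of X and u
  have F6 : ∀ z ∈ Ω, ∃ κ : ℂ,
      Wp (Wm (Wp X)) z = κ • X z + ((-1/4 : ℂ) * ρ z) • Wp X z := by
    intro z hz
    have hsd : DifferentiableAt ℝ (fun w => (-1/4 : ℂ) * ρ w) z :=
      (hρd z hz).const_mul _
    have hev : Wm (Wp X) =ᶠ[𝓝 z] fun w => ((-1/4 : ℂ) * ρ w) • X w := by
      filter_upwards [hΩ.mem_nhds hz] with w hw using F4 w hw
    have hDv : ∀ v : ℂ, Dd v (Wm (Wp X)) z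
        = (fderiv ℝ (fun w => (-1/4 : ℂ) * ρ w) z v) • X z
          + ((-1/4 : ℂ) * ρ z) • Dd v X z := by
      intro v
      have h1 : fderiv ℝ (Wm (Wp X)) z
          = fderiv ℝ (fun w => ((-1/4 : ℂ) * ρ w) • X w) z := hev.fderiv_eq
      show fderiv ℝ (Wm (Wp X)) z v = _
      rw [h1, HasFDerivAt.fderiv (f := fun w => ((-1/4 : ℂ) * ρ w) • X w)
        (hsd.hasFDerivAt.smul (hXd hz).hasFDerivAt)]
      simp only [ContinuousLinearMap.add_apply, ContinuousLinearMap.smul_apply,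
        ContinuousLinearMap.smulRight_apply, Dd]
      module
    refine ⟨(1/2 : ℂ) * (fderiv ℝ (fun w => (-1/4 : ℂ) * ρ w) z 1
      - Complex.I * fderiv ℝ (fun w => (-1/4 : ℂ) * ρ w) z Complex.I), ?_⟩
    show (1/2 : ℂ) • (Dd 1 (Wm (Wp X)) z - Complex.I • Dd Complex.I (Wm (Wp X)) z) = _
    rw [hDv 1, hDv Complex.I]
    have hu : Wp X z = (1/2 : ℂ) • (Dd 1 X z - Complex.I • Dd Complex.I X z) := rfl
    rw [hu]
    match_scalars <;> ring
  -- Final key : η(∂_z̄ Q, Q) = 0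
  have Fkey : ∀ z ∈ Ω, etaC (Wm (Wp (Wp X)) z) (Wp (Wp X) z) = 0 := by
    intro z hz
    have hcomm : Wm (Wp (Wp X)) z = Wp (Wm (Wp X)) z :=
      (Wm_Wp hΩ husm hz).trans (Wp_Wm hΩ husm hz).symm
    obtain ⟨κ, hκ⟩ := F6 z hz
    rw [hcomm, hκ, etaC_add_left, etaC_smul_left, etaC_smul_left, F2 z hz, F3 z hz]
    ring
  -- Conversion of dZ to Wp on Ω
  have hA : ∀ w ∈ Ω, dZ X w = Wp X w := by
    intro w hw
    have h1 : pTC X w = Dd 1 X w :=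
      line_deriv (hXd hw) (fun s : ℝ => w + (s:ℂ)) (hasDerivAt_lineT w) (by simp)
    have h2 : pThC X w = Dd Complex.I X w :=
      line_deriv (hXd hw) (fun s : ℝ => w + (s:ℂ) * Complex.I) (hasDerivAt_lineTh w) (by simp)
    show (1 / 2 : ℂ) • (pTC X w - Complex.I • pThC X w) = _
    rw [h1, h2]
    rfl
  have hB : ∀ z ∈ Ω, dZ (dZ X) z = Wp (Wp X) z := by
    intro z hz
    have h1 : pTC (dZ X) z = Dd 1 (Wp X) z := by
      have := deriv_congr_line hΩ hA hz (fun s : ℝ => z + (s:ℂ))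
        (continuous_const.add Complex.continuous_ofReal) (by simp)
      exact this.trans (line_deriv (hud hz) (fun s : ℝ => z + (s:ℂ))
        (hasDerivAt_lineT z) (by simp))
    have h2 : pThC (dZ X) z = Dd Complex.I (Wp X) z := by
      have := deriv_congr_line hΩ hA hz (fun s : ℝ => z + (s:ℂ) * Complex.I)
        (continuous_const.add (Complex.continuous_ofReal.mul continuous_const)) (by simp)
      exact this.trans (line_deriv (hud hz) (fun s : ℝ => z + (s:ℂ) * Complex.I)
        (hasDerivAt_lineTh z) (by simp))
    show (1 / 2 : ℂ) • (pTC (dZ X) z - Complex.I • pThC (dZ X) z) = _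
    rw [h1, h2]
    rfl
  -- Holomorphy of the fderiv-version of the quartic
  have hmain : DifferentiableOn ℂ (fun w => etaC (Wp (Wp X) w) (Wp (Wp X) w)) Ω := by
    intro z hz
    have hη := eta_deriv (hQd hz) (hQd hz)
    -- Cauchy–Riemann from Fkey
    have hzero : fderiv ℝ (fun w => etaC (Wp (Wp X) w) (Wp (Wp X) w)) z 1
        + Complex.I * fderiv ℝ (fun w => etaC (Wp (Wp X) w) (Wp (Wp X) w)) z Complex.I = 0 := by
      rw [hη.2 1, hη.2 Complex.I]
      have hWm := Fkey z hz
      rw [etaC_Wm_left] at hWm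
      have hs1 : etaC (Wp (Wp X) z) (Dd 1 (Wp (Wp X)) z)
          = etaC (Dd 1 (Wp (Wp X)) z) (Wp (Wp X) z) := etaC_symm _ _
      have hsI : etaC (Wp (Wp X) z) (Dd Complex.I (Wp (Wp X)) z)
          = etaC (Dd Complex.I (Wp (Wp X)) z) (Wp (Wp X) z) := etaC_symm _ _
      linear_combination (4 : ℂ) * hWm + hs1 + Complex.I * hsI
    have hL : ∀ w : ℂ, fderiv ℝ (fun w => etaC (Wp (Wp X) w) (Wp (Wp X) w)) z w
        = w * fderiv ℝ (fun w => etaC (Wp (Wp X) w) (Wp (Wp X) w)) z 1 := by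
      intro w
      have hI : fderiv ℝ (fun w => etaC (Wp (Wp X) w) (Wp (Wp X) w)) z Complex.I
          = Complex.I * fderiv ℝ (fun w => etaC (Wp (Wp X) w) (Wp (Wp X) w)) z 1 := by
        linear_combination (-Complex.I) * hzero
          + (fderiv ℝ (fun w => etaC (Wp (Wp X) w) (Wp (Wp X) w)) z Complex.I) * Complex.I_sq
      have hw : w = w.re • (1:ℂ) + w.im • Complex.I := by
        simp [Complex.real_smul, Complex.re_add_im]
      calc fderiv ℝ (fun w => etaC (Wp (Wp X) w) (Wp (Wp X) w)) z w
          = fderiv ℝ (fun w => etaC (Wp (Wp X) w) (Wp (Wp X) w)) z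
            (w.re • (1:ℂ) + w.im • Complex.I) := by rw [← hw]
        _ = w.re • fderiv ℝ (fun w => etaC (Wp (Wp X) w) (Wp (Wp X) w)) z 1
            + w.im • fderiv ℝ (fun w => etaC (Wp (Wp X) w) (Wp (Wp X) w)) z Complex.I := by
            rw [map_add, map_smul, map_smul]
        _ = w * fderiv ℝ (fun w => etaC (Wp (Wp X) w) (Wp (Wp X) w)) z 1 := by
            rw [hI]
            simp only [Complex.real_smul]
            linear_combination
              (fderiv ℝ (fun w => etaC (Wp (Wp X) w) (Wp (Wp X) w)) z 1) * Complex.re_add_im w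
    -- upgrade to complex differentiability
    have hcplx : HasFDerivAt (𝕜 := ℂ) (fun w => etaC (Wp (Wp X) w) (Wp (Wp X) w))
        ((1 : ℂ →L[ℂ] ℂ).smulRight
          (fderiv ℝ (fun w => etaC (Wp (Wp X) w) (Wp (Wp X) w)) z 1)) z := by
      apply hasFDerivAt_of_restrictScalars (𝕜 := ℝ) hη.1.hasFDerivAt
      ext w
      simp only [ContinuousLinearMap.coe_restrictScalars', ContinuousLinearMap.smulRight_apply,
        ContinuousLinearMap.one_apply, smul_eq_mul]
      exact (hL w).symm
    exact hcplx.differentiableAt.differentiableWithinAt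
  exact hmain.congr (fun z hz => by rw [hB z hz])
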